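/- Let K ⊆ ℂ be a convex body with 0 in its interior and let B : ℂ → ℂ be an invertible ℝ-linear map with B(K) = K. Assume the gauge g_K is (Fréchet) differentiable at every nonzero point of ℂ. Let γ : ℝ → ℂ be a differentiable map such that the function t ↦ g_K(B(γ(t)) − γ(t)) is constant on ℝ, and fix t₀ ∈ ℝ with B(γ(t₀)) ≠ γ(t₀). Then the function f(τ) = g_K(B(γ(t₀)) − γ(τ)) + g_K(γ(τ) − B⁻¹(γ(t₀))) is differentiable at τ = t₀ and f'(t₀) = 0. -/

import Mathlib

lemma gauge_linearEquiv_image {K : Set ℂ} (B : ℂ ≃ₗ[ℝ] ℂ) (hBK : B '' K = K) (y : ℂ) :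
    gauge K (B y) = gauge K y := by
  unfold gauge
  congr 1
  ext r
  simp only [Set.mem_setOf_eq, and_congr_right_iff]
  intro _
  rw [Set.mem_smul_set, Set.mem_smul_set]
  constructor
  · rintro ⟨k, hk, hkeq⟩
    rw [← hBK] at hk
    obtain ⟨k', hk', rfl⟩ := hk
    refine ⟨k', hk', ?_⟩
    apply B.injective
    rw [← hkeq, map_smul]
  · rintro ⟨k, hk, rfl⟩
    exact ⟨B k, hBK ▸ Set.mem_image_of_mem _ hk, (map_smul B r k).symm⟩

theorem stmt_16 (K : Set ℂ) (hKcomp : IsCompact K) (hKconv : Convex ℝ K)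
    (h0 : (0 : ℂ) ∈ interior K)
    (B : ℂ ≃ₗ[ℝ] ℂ) (hBK : B '' K = K)
    (hdiff : ∀ x : ℂ, x ≠ 0 → DifferentiableAt ℝ (gauge K) x)
    (γ : ℝ → ℂ) (hγ : Differentiable ℝ γ)
    (c : ℝ) (hconst : ∀ t : ℝ, gauge K (B (γ t) - γ t) = c)
    (t₀ : ℝ) (hne : B (γ t₀) ≠ γ t₀) :
    DifferentiableAt ℝ
      (fun τ : ℝ => gauge K (B (γ t₀) - γ τ) + gauge K (γ τ - B.symm (γ t₀))) t₀ ∧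
    deriv (fun τ : ℝ => gauge K (B (γ t₀) - γ τ) + gauge K (γ τ - B.symm (γ t₀))) t₀ = 0 := by
  classical
  set x : ℂ := B (γ t₀) - γ t₀ with hx
  have hxne : x ≠ 0 := sub_ne_zero.mpr hne
  have hg : DifferentiableAt ℝ (gauge K) x := hdiff x hxne
  set L : ℂ →L[ℝ] ℝ := fderiv ℝ (gauge K) x with hL
  have hgF : HasFDerivAt (gauge K) L x := hg.hasFDerivAt
  set γ' : ℂ := deriv γ t₀ with hγ'
  have hγd : HasDerivAt γ γ' t₀ := (hγ t₀).hasDerivAt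
  -- continuous linear map version of B
  let Bc : ℂ →L[ℝ] ℂ := (B : ℂ →ₗ[ℝ] ℂ).toContinuousLinearMap
  have hBc : ∀ z : ℂ, Bc z = B z := fun z => rfl
  -- the second gauge term rewrites
  have hrw : ∀ τ : ℝ, gauge K (γ τ - B.symm (γ t₀)) = gauge K (B (γ τ) - γ t₀) := by
    intro τ
    rw [← gauge_linearEquiv_image B hBK (γ τ - B.symm (γ t₀))]
    congr 1
    simp [map_sub]
  -- derivative of τ ↦ B (γ τ)
  have hBγ : HasDerivAt (fun τ => B (γ τ)) (B γ') t₀ := by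
    have := Bc.hasFDerivAt.comp_hasDerivAt t₀ hγd
    exact this
  -- derivative of constant function gives the key identity
  have hwdiff : HasDerivAt (fun τ => gauge K (B (γ τ) - γ τ)) (L (B γ' - γ')) t₀ := by
    have hinner : HasDerivAt (fun τ => B (γ τ) - γ τ) (B γ' - γ') t₀ := hBγ.sub hγd
    exact hgF.comp_hasDerivAt t₀ hinner
  have hkey : L (B γ' - γ') = 0 := by
    have hconst' : (fun τ => gauge K (B (γ τ) - γ τ)) = fun _ => c := funext hconst
    have : deriv (fun τ => gauge K (B (γ τ) - γ τ)) t₀ = 0 := by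
      rw [hconst']; simp
    rw [← hwdiff.deriv]; exact this
  -- derivative of first term
  have h1 : HasDerivAt (fun τ => gauge K (B (γ t₀) - γ τ)) (L (0 - γ')) t₀ := by
    have hinner : HasDerivAt (fun τ => B (γ t₀) - γ τ) (0 - γ') t₀ :=
      (hasDerivAt_const t₀ (B (γ t₀))).sub hγd
    exact hgF.comp_hasDerivAt t₀ hinner
  -- derivative of second (rewritten) term
  have h2 : HasDerivAt (fun τ => gauge K (B (γ τ) - γ t₀)) (L (B γ' - 0)) t₀ := by
    have hinner : HasDerivAt (fun τ => B (γ τ) - γ t₀) (B γ' - 0) t₀ :=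
      hBγ.sub (hasDerivAt_const t₀ (γ t₀))
    exact hgF.comp_hasDerivAt t₀ hinner
  have hfun : (fun τ : ℝ => gauge K (B (γ t₀) - γ τ) + gauge K (γ τ - B.symm (γ t₀)))
      = fun τ : ℝ => gauge K (B (γ t₀) - γ τ) + gauge K (B (γ τ) - γ t₀) := by
    funext τ; rw [hrw τ]
  have hsum : HasDerivAt
      (fun τ : ℝ => gauge K (B (γ t₀) - γ τ) + gauge K (γ τ - B.symm (γ t₀)))
      (L (0 - γ') + L (B γ' - 0)) t₀ := by
    rw [hfun]; exact h1.add h2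
  have hval : L (0 - γ') + L (B γ' - 0) = 0 := by
    rw [← hkey]
    simp [map_sub]
    abel
  refine ⟨hsum.differentiableAt, ?_⟩
  rw [hsum.deriv, hval]
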